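/- For finitely supported uniform measures μ = (1/n)∑δ_{x_i} and ν = (1/n)∑δ_{y_i} on a compact metric space X, the optimal matching distance δ(μ,ν) = inf{r | for all Borel U, μ(U) ≤ ν(U_r) and ν(U) ≤ μ(U_r)} (where U_r is the open r-neighbourhood of U) equals min over permutations σ ∈ S_n of max_{1≤i≤n} d(x_i, y_{σ(i)}). -/

import Mathlib

open MeasureTheory Metric
open scoped ENNReal

/-- The optimal matching distance between two Borel measures. -/
noncomputable def matchDist {X : Type*} [PseudoMetricSpace X] [MeasurableSpace X]
    (μ ν : Measure X) : ℝ :=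
  sInf {r : ℝ | ∀ U : Set X, MeasurableSet U →
    μ U ≤ ν (Metric.thickening r U) ∧ ν U ≤ μ (Metric.thickening r U)}

/-- For uniform finitely supported measures on a compact metric space, the optimal
matching distance equals the optimal matching of the supporting points. -/
theorem stmt0 {X : Type*} [MetricSpace X] [CompactSpace X]
    [MeasurableSpace X] [BorelSpace X]
    (n : ℕ) (hn : 0 < n) (x y : Fin n → X) :
    matchDist
      (((n : ℝ≥0∞)⁻¹) • ∑ i, Measure.dirac (x i))
      (((n : ℝ≥0∞)⁻¹) • ∑ i, Measure.dirac (y i))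
    = ⨅ σ : Equiv.Perm (Fin n), ⨆ i, dist (x i) (y (σ i)) := by
  classical
  have hne : Nonempty (Fin n) := ⟨⟨0, hn⟩⟩
  set g : Equiv.Perm (Fin n) → ℝ := fun σ => ⨆ i, dist (x i) (y (σ i)) with hg
  obtain ⟨σ₀, hσ₀⟩ := Finite.exists_min g
  have hgm : ∀ (σ : Equiv.Perm (Fin n)) (i : Fin n), dist (x i) (y (σ i)) ≤ g σ := by
    intro σ i
    exact le_ciSup (f := fun j => dist (x j) (y (σ j)))
      (Set.Finite.bddAbove (Set.finite_range _)) i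
  -- evaluation of the measures
  have meas_apply : ∀ (z : Fin n → X) (U : Set X), MeasurableSet U →
      (((n : ℝ≥0∞)⁻¹) • ∑ i, Measure.dirac (z i)) U
        = (n : ℝ≥0∞)⁻¹ * ((Finset.univ.filter (fun i => z i ∈ U)).card : ℝ≥0∞) := by
    intro z U hU
    rw [Measure.smul_apply, Measure.finset_sum_apply, smul_eq_mul]
    congr 1
    rw [Finset.card_filter]
    push_cast
    refine Finset.sum_congr rfl fun i _ => ?_
    rw [Measure.dirac_apply' _ hU, Set.indicator_apply]
    by_cases h : z i ∈ U <;> simp [h]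
  set S := {r : ℝ | ∀ U : Set X, MeasurableSet U →
      (((n : ℝ≥0∞)⁻¹) • ∑ i, Measure.dirac (x i)) U
        ≤ (((n : ℝ≥0∞)⁻¹) • ∑ i, Measure.dirac (y i)) (Metric.thickening r U) ∧
      (((n : ℝ≥0∞)⁻¹) • ∑ i, Measure.dirac (y i)) U
        ≤ (((n : ℝ≥0∞)⁻¹) • ∑ i, Measure.dirac (x i)) (Metric.thickening r U)} with hS
  -- every r > g σ₀ lies in S
  have h2 : ∀ r : ℝ, g σ₀ < r → r ∈ S := by
    intro r hr U hU
    have hthick : MeasurableSet (Metric.thickening r U) :=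
      (isOpen_thickening).measurableSet
    constructor
    · rw [meas_apply x U hU, meas_apply y _ hthick]
      refine mul_le_mul_right ?_ _
      refine Nat.cast_le.mpr ?_
      refine Finset.card_le_card_of_injOn (fun i => σ₀ i) ?_ ?_
      · intro i hi
        simp only [Finset.coe_filter, Finset.mem_coe, Set.mem_setOf_eq, Finset.mem_filter, Finset.mem_univ, true_and] at hi ⊢
        exact Metric.mem_thickening_iff.2
          ⟨x i, hi, by rw [dist_comm]; exact lt_of_le_of_lt (hgm σ₀ i) hr⟩
      · exact fun a _ b _ h => σ₀.injective h
    · rw [meas_apply y U hU, meas_apply x _ hthick]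
      refine mul_le_mul_right ?_ _
      refine Nat.cast_le.mpr ?_
      refine Finset.card_le_card_of_injOn (fun j => σ₀⁻¹ j) ?_ ?_
      · intro j hj
        simp only [Finset.coe_filter, Finset.mem_coe, Set.mem_setOf_eq, Finset.mem_filter, Finset.mem_univ, true_and] at hj ⊢
        refine Metric.mem_thickening_iff.2 ⟨y j, hj, ?_⟩
        have := hgm σ₀ (σ₀⁻¹ j)
        rw [Equiv.Perm.inv_def, Equiv.apply_symm_apply] at this
        exact lt_of_le_of_lt this hr
      · exact fun a _ b _ h => (σ₀⁻¹).injective h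
  -- every r ∈ S satisfies g σ₀ ≤ r  (Hall's marriage theorem)
  have h1 : ∀ r ∈ S, g σ₀ ≤ r := by
    intro r hr
    have hall : ∀ A : Finset (Fin n),
        A.card ≤ (Finset.univ.filter (fun j => ∃ i ∈ A, dist (x i) (y j) < r)).card := by
      intro A
      set U : Set X := x '' (A : Set (Fin n)) with hUdef
      have hUfin : U.Finite := A.finite_toSet.image x
      have hU : MeasurableSet U := hUfin.isClosed.measurableSet
      have key := (hr U hU).1
      rw [meas_apply x U hU, meas_apply y _ isOpen_thickening.measurableSet] at key
      have hn0 : ((n : ℝ≥0∞)⁻¹) ≠ 0 := by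
        simp [ENNReal.inv_ne_zero]
      have hninf : ((n : ℝ≥0∞)⁻¹) ≠ ∞ := by
        simp [ENNReal.inv_ne_top, hn.ne']
      have key' := (ENNReal.mul_le_mul_iff_right hn0 hninf).mp key
      have key'' : (Finset.univ.filter (fun i => x i ∈ U)).card
          ≤ (Finset.univ.filter (fun j => y j ∈ Metric.thickening r U)).card :=
        Nat.cast_le.mp key'
      have hA : A.card ≤ (Finset.univ.filter (fun i => x i ∈ U)).card := by
        refine Finset.card_le_card fun i hi => ?_
        simp only [Finset.mem_filter, Finset.mem_univ, true_and, hUdef, Set.mem_image]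
        exact ⟨i, hi, rfl⟩
      have heq : (Finset.univ.filter (fun j => y j ∈ Metric.thickening r U))
          = (Finset.univ.filter (fun j => ∃ i ∈ A, dist (x i) (y j) < r)) := by
        refine Finset.filter_congr fun j _ => ?_
        simp only [Metric.mem_thickening_iff, hUdef, Set.mem_image, Finset.mem_coe,
          eq_iff_iff]
        constructor
        · rintro ⟨z, hz, hdz⟩
          obtain ⟨i, hi, rfl⟩ := hz
          exact ⟨i, hi, by rwa [dist_comm]⟩
        · rintro ⟨i, hi, hdi⟩
          exact ⟨x i, ⟨i, hi, rfl⟩, by rwa [dist_comm]⟩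
      rw [heq] at key''
      exact hA.trans key''
    have hall' : ∀ A : Finset (Fin n),
        A.card ≤ ({j | ∃ i ∈ A, dist (x i) (y j) < r} : Finset (Fin n)).card := by
      intro A
      simpa using hall A
    obtain ⟨f, hfinj, hf⟩ :=
      (Fintype.all_card_le_filter_rel_iff_exists_injective
        (fun i j => dist (x i) (y j) < r)).mp (by convert hall')
    let σ : Equiv.Perm (Fin n) := Equiv.ofBijective f ((Finite.injective_iff_bijective).mp hfinj)
    have : g σ ≤ r := ciSup_le fun i => (hf i).le
    exact (hσ₀ σ).trans this
  -- combine
  have hRHS : (⨅ σ : Equiv.Perm (Fin n), ⨆ i, dist (x i) (y (σ i))) = g σ₀ := by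
    refine le_antisymm (ciInf_le (Finite.bddBelow_range g) σ₀) (le_ciInf hσ₀)
  rw [hRHS, matchDist]
  have hbdd : BddBelow S := ⟨g σ₀, fun r hr => h1 r hr⟩
  refine le_antisymm ?_ (le_csInf ⟨g σ₀ + 1, h2 _ (by linarith)⟩ h1)
  refine le_of_forall_pos_le_add fun ε hε => ?_
  exact csInf_le hbdd (h2 _ (by linarith))
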